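/- Let H ∈ (1/2, 1), set α_H = H(2H−1) and φ(y) = α_H |y|^{2H−2} for y ≠ 0. Let (λ_i)_{i∈ℕ} be a sequence of positive real numbers and let (a_i)_{i∈ℕ} be a square-summable sequence of real numbers. Then there exists a constant C > 0, depending only on H, such that for every δ ∈ [0, H] and all 0 ≤ s < t, one has ∫_s^t ∫_s^t ( Σ_{i∈ℕ} λ_i^{2δ} e^{−λ_i(2t−u−v)} a_i² ) φ(u−v) du dv ≤ C (t−s)^{2(H−δ)} Σ_{i∈ℕ} a_i². -/

import Mathlib

open MeasureTheory Set Real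
open scoped ENNReal NNReal

namespace Stmt3Aux


lemma ofReal_int_le (f : ℝ → ℝ) (μ : Measure ℝ) (hf : 0 ≤ᵐ[μ] f) :
    ENNReal.ofReal (∫ x, f x ∂μ) ≤ ∫⁻ x, ENNReal.ofReal (f x) ∂μ := by
  by_cases hi : Integrable f μ
  · exact (ofReal_integral_eq_lintegral_ofReal hi hf).le
  · rw [integral_undef hi]; simp

lemma image_sub_Iio (u : ℝ) : (fun x : ℝ => u - x) '' Iio u = Ioi 0 := by
  ext y
  constructor
  · rintro ⟨x, hx, rfl⟩; simp only [mem_Iio] at hx; simp only [mem_Ioi]; linarith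
  · intro hy; simp only [mem_Ioi] at hy
    exact ⟨u - y, by simp only [mem_Iio]; linarith, by ring⟩

lemma image_sub_Ioo (u r : ℝ) : (fun x : ℝ => u - x) '' Ioo (u - r) u = Ioo 0 r := by
  ext y
  constructor
  · rintro ⟨x, hx, rfl⟩; simp only [mem_Ioo] at hx ⊢
    exact ⟨by linarith [hx.2], by linarith [hx.1]⟩
  · intro hy; simp only [mem_Ioo] at hy
    exact ⟨u - y, by simp only [mem_Ioo]; exact ⟨by linarith, by linarith⟩, by ring⟩

lemma image_add_Ici (u : ℝ) : (fun x : ℝ => x + u) '' Ici 0 = Ici u := by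
  ext y; constructor
  · rintro ⟨x, hx, rfl⟩; simp only [mem_Ici] at hx ⊢; linarith
  · intro hy; simp only [mem_Ici] at hy
    exact ⟨y - u, by simp only [mem_Ici]; linarith, by ring⟩

lemma image_add_Ico (u r : ℝ) : (fun x : ℝ => x + u) '' Ico 0 r = Ico u (u + r) := by
  ext y; constructor
  · rintro ⟨x, hx, rfl⟩; simp only [mem_Ico] at hx ⊢
    exact ⟨by linarith [hx.1], by linarith [hx.2]⟩
  · intro hy; simp only [mem_Ico] at hy
    exact ⟨y - u, by simp only [mem_Ico]; exact ⟨by linarith, by linarith⟩, by ring⟩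

lemma lintegral_sub_left (u : ℝ) (f : ℝ → ℝ≥0∞) (S : Set ℝ) :
    ∫⁻ v in S, f (u - v) = ∫⁻ y in (fun x : ℝ => u - x) '' S, f y :=
  (Measure.measurePreserving_sub_left volume u).setLIntegral_comp_emb
    (MeasurableEquiv.subLeft u).measurableEmbedding f S

lemma lintegral_add_right' (u : ℝ) (f : ℝ → ℝ≥0∞) (S : Set ℝ) :
    ∫⁻ v in S, f (v + u) = ∫⁻ y in (fun x : ℝ => x + u) '' S, f y :=
  (measurePreserving_add_right volume u).setLIntegral_comp_emb
    (MeasurableEquiv.addRight u).measurableEmbedding f S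

lemma integrableOn_exp_rpow {p c : ℝ} (hp : -1 < p) (hc : 0 < c) :
    IntegrableOn (fun y : ℝ => y ^ p * Real.exp (-(c * y))) (Ioi 0) := by
  have h := integrableOn_rpow_mul_exp_neg_mul_rpow hp zero_lt_one hc
  refine h.congr_fun (fun x _ => ?_) measurableSet_Ioi
  simp only [Real.rpow_one, neg_mul]

lemma lintegral_Ioi_exp_rpow {p c : ℝ} (hp : -1 < p) (hc : 0 < c) :
    ∫⁻ y in Ioi (0:ℝ), ENNReal.ofReal (y ^ p * Real.exp (-(c * y)))
      = ENNReal.ofReal ((1/c) ^ (p+1) * Real.Gamma (p+1)) := by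
  rw [← ofReal_integral_eq_lintegral_ofReal (integrableOn_exp_rpow hp hc) ?h]
  · congr 1
    have h2 := integral_rpow_mul_exp_neg_mul_Ioi (show (0:ℝ) < p + 1 by linarith) hc
    rw [add_sub_cancel_right] at h2
    exact h2
  case h =>
    filter_upwards [ae_restrict_mem measurableSet_Ioi] with y hy
    have hy' : (0:ℝ) < y := hy
    positivity

lemma lintegral_Ioo_rpow {p r : ℝ} (hp : -1 < p) (hr : 0 < r) :
    ∫⁻ y in Ioo (0:ℝ) r, ENNReal.ofReal (y ^ p) = ENNReal.ofReal (r ^ (p+1) / (p+1)) := by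
  have hint : IntegrableOn (fun y : ℝ => y ^ p) (Ioo 0 r) := by
    have h := (intervalIntegral.intervalIntegrable_rpow' (a := 0) (b := r) hp)
    rw [intervalIntegrable_iff_integrableOn_Ioc_of_le hr.le] at h
    exact h.mono_set Ioo_subset_Ioc_self
  rw [← ofReal_integral_eq_lintegral_ofReal hint ?h]
  · congr 1
    have h1 : ∫ y in Ioo (0:ℝ) r, y ^ p = ∫ y in (0:ℝ)..r, y ^ p := by
      rw [intervalIntegral.integral_of_le hr.le, integral_Ioc_eq_integral_Ioo]
    rw [h1, integral_rpow (Or.inl hp),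
      Real.zero_rpow (show p + 1 ≠ 0 by linarith)]
    ring
  case h =>
    filter_upwards [ae_restrict_mem measurableSet_Ioo] with y hy
    exact Real.rpow_nonneg (le_of_lt hy.1) p



lemma inner_exp_bound {p c : ℝ} (hp : -1 < p) (hc : 0 < c) (u s t : ℝ) :
    ∫⁻ v in Ioo s t, ENNReal.ofReal (|u - v| ^ p * Real.exp (-(c * |u - v|)))
      ≤ ENNReal.ofReal (2 * ((1/c) ^ (p+1) * Real.Gamma (p+1))) := by
  have hI : (0:ℝ) ≤ (1/c) ^ (p+1) * Real.Gamma (p+1) :=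
    mul_nonneg (Real.rpow_nonneg (by positivity) _)
      (Real.Gamma_pos_of_pos (by linarith)).le
  have h1 : ∫⁻ v in Iio u, ENNReal.ofReal (|u - v| ^ p * Real.exp (-(c * |u - v|)))
      = ENNReal.ofReal ((1/c) ^ (p+1) * Real.Gamma (p+1)) := by
    have e1 : ∫⁻ v in Iio u, ENNReal.ofReal (|u - v| ^ p * Real.exp (-(c * |u - v|)))
        = ∫⁻ v in Iio u, (fun w => ENNReal.ofReal (w ^ p * Real.exp (-(c * w)))) (u - v) := by
      refine setLIntegral_congr_fun measurableSet_Iio (fun v hv => ?_)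
      simp only
      rw [abs_of_pos (sub_pos.mpr hv)]
    rw [e1, lintegral_sub_left u (fun w => ENNReal.ofReal (w ^ p * Real.exp (-(c * w)))) (Iio u), image_sub_Iio, lintegral_Ioi_exp_rpow hp hc]
  have h2 : ∫⁻ v in Ici u, ENNReal.ofReal (|u - v| ^ p * Real.exp (-(c * |u - v|)))
      = ENNReal.ofReal ((1/c) ^ (p+1) * Real.Gamma (p+1)) := by
    have e2 : ∫⁻ x in Ici (0:ℝ),
        (fun v => ENNReal.ofReal (|u - v| ^ p * Real.exp (-(c * |u - v|)))) (x + u)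
        = ∫⁻ v in Ici u, ENNReal.ofReal (|u - v| ^ p * Real.exp (-(c * |u - v|))) := by
      rw [lintegral_add_right' u (fun v => ENNReal.ofReal (|u - v| ^ p * Real.exp (-(c * |u - v|)))) (Ici 0), image_add_Ici]
    rw [← e2]
    have e3 : ∫⁻ x in Ici (0:ℝ),
        (fun v => ENNReal.ofReal (|u - v| ^ p * Real.exp (-(c * |u - v|)))) (x + u)
        = ∫⁻ x in Ici (0:ℝ), ENNReal.ofReal (x ^ p * Real.exp (-(c * x))) := by
      refine setLIntegral_congr_fun measurableSet_Ici (fun x hx => ?_)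
      simp only
      have : u - (x + u) = -x := by ring
      rw [this, abs_neg, abs_of_nonneg hx]
    rw [e3, setLIntegral_congr (Ioi_ae_eq_Ici (a := (0:ℝ))).symm,
      lintegral_Ioi_exp_rpow hp hc]
  calc ∫⁻ v in Ioo s t, ENNReal.ofReal (|u - v| ^ p * Real.exp (-(c * |u - v|)))
      ≤ ∫⁻ v in Iio u ∪ Ici u, ENNReal.ofReal (|u - v| ^ p * Real.exp (-(c * |u - v|))) :=
        lintegral_mono_set (by rw [Iio_union_Ici]; exact subset_univ _)
    _ ≤ (∫⁻ v in Iio u, ENNReal.ofReal (|u - v| ^ p * Real.exp (-(c * |u - v|))))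
        + ∫⁻ v in Ici u, ENNReal.ofReal (|u - v| ^ p * Real.exp (-(c * |u - v|))) :=
        lintegral_union_le _ _ _
    _ = ENNReal.ofReal (2 * ((1/c) ^ (p+1) * Real.Gamma (p+1))) := by
        rw [h1, h2, ← ENNReal.ofReal_add hI hI, two_mul]

lemma inner_rpow_bound {p : ℝ} (hp : -1 < p) {s t u : ℝ} (hu : u ∈ Ioo s t) :
    ∫⁻ v in Ioo s t, ENNReal.ofReal (|u - v| ^ p)
      ≤ ENNReal.ofReal (2 * ((t - s) ^ (p+1) / (p+1))) := by
  set r := t - s with hrdef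
  have hr0 : 0 < r := sub_pos.mpr (hu.1.trans hu.2)
  have hV : (0:ℝ) ≤ r ^ (p+1) / (p+1) :=
    div_nonneg (Real.rpow_nonneg hr0.le _) (by linarith)
  have hsub : Ioo s t ⊆ Ioo (u - r) u ∪ Ico u (u + r) := by
    intro v hv
    rcases lt_or_ge v u with h | h
    · exact Or.inl ⟨by simp only [mem_Ioo] at hu hv; linarith [hu.2, hv.1], h⟩
    · exact Or.inr ⟨h, by simp only [mem_Ioo] at hu hv; linarith [hu.1, hv.2]⟩
  have h1 : ∫⁻ v in Ioo (u - r) u, ENNReal.ofReal (|u - v| ^ p)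
      = ENNReal.ofReal (r ^ (p+1) / (p+1)) := by
    have e1 : ∫⁻ v in Ioo (u - r) u, ENNReal.ofReal (|u - v| ^ p)
        = ∫⁻ v in Ioo (u - r) u, (fun w => ENNReal.ofReal (w ^ p)) (u - v) := by
      refine setLIntegral_congr_fun measurableSet_Ioo (fun v hv => ?_)
      simp only
      rw [abs_of_pos (sub_pos.mpr hv.2)]
    rw [e1, lintegral_sub_left u (fun w => ENNReal.ofReal (w ^ p)) (Ioo (u - r) u), image_sub_Ioo, lintegral_Ioo_rpow hp hr0]
  have h2 : ∫⁻ v in Ico u (u + r), ENNReal.ofReal (|u - v| ^ p)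
      = ENNReal.ofReal (r ^ (p+1) / (p+1)) := by
    have e2 : ∫⁻ x in Ico (0:ℝ) r, (fun v => ENNReal.ofReal (|u - v| ^ p)) (x + u)
        = ∫⁻ v in Ico u (u + r), ENNReal.ofReal (|u - v| ^ p) := by
      rw [lintegral_add_right' u (fun v => ENNReal.ofReal (|u - v| ^ p)) (Ico 0 r), image_add_Ico]
    rw [← e2]
    have e3 : ∫⁻ x in Ico (0:ℝ) r, (fun v => ENNReal.ofReal (|u - v| ^ p)) (x + u)
        = ∫⁻ x in Ico (0:ℝ) r, ENNReal.ofReal (x ^ p) := by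
      refine setLIntegral_congr_fun measurableSet_Ico (fun x hx => ?_)
      simp only
      have : u - (x + u) = -x := by ring
      rw [this, abs_neg, abs_of_nonneg hx.1]
    rw [e3, setLIntegral_congr (Ioo_ae_eq_Ico (a := (0:ℝ)) (b := r)).symm,
      lintegral_Ioo_rpow hp hr0]
  calc ∫⁻ v in Ioo s t, ENNReal.ofReal (|u - v| ^ p)
      ≤ ∫⁻ v in Ioo (u - r) u ∪ Ico u (u + r), ENNReal.ofReal (|u - v| ^ p) :=
        lintegral_mono_set hsub
    _ ≤ (∫⁻ v in Ioo (u - r) u, ENNReal.ofReal (|u - v| ^ p))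
        + ∫⁻ v in Ico u (u + r), ENNReal.ofReal (|u - v| ^ p) := lintegral_union_le _ _ _
    _ = ENNReal.ofReal (2 * (r ^ (p+1) / (p+1))) := by
        rw [h1, h2, ← ENNReal.ofReal_add hV hV, two_mul]



lemma J_bound1 {H s t : ℝ} (hH1 : 1/2 < H) (hH2 : H < 1) (hst : s < t) {lam : ℝ}
    (hlam : 0 < lam) :
    ∫⁻ u in Ioo s t, ∫⁻ v in Ioo s t,
        ENNReal.ofReal (Real.exp (-lam * (2*t - u - v)) * (H * (2*H - 1) * |u - v| ^ (2*H - 2)))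
      ≤ ENNReal.ofReal (2 * H * (t - s) ^ (2*H)) := by
  have hp : -1 < 2*H - 2 := by linarith
  have hα : (0:ℝ) ≤ H * (2*H - 1) := by nlinarith
  have hts : (0:ℝ) < t - s := sub_pos.mpr hst
  set D : ℝ := H * (2*H - 1) * (2 * ((t - s) ^ (2*H - 1) / (2*H - 1))) with hD
  have hD0 : 0 ≤ D := by
    apply mul_nonneg hα
    apply mul_nonneg (by norm_num)
    exact div_nonneg (Real.rpow_nonneg hts.le _) (by linarith)
  have inner : ∀ u ∈ Ioo s t, ∫⁻ v in Ioo s t,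
      ENNReal.ofReal (Real.exp (-lam * (2*t - u - v)) * (H * (2*H - 1) * |u - v| ^ (2*H - 2)))
      ≤ ENNReal.ofReal D := by
    intro u hu
    have hb := inner_rpow_bound hp hu
    rw [show (2*H - 2) + 1 = 2*H - 1 by ring] at hb
    calc ∫⁻ v in Ioo s t,
        ENNReal.ofReal (Real.exp (-lam * (2*t - u - v)) * (H * (2*H - 1) * |u - v| ^ (2*H - 2)))
        ≤ ∫⁻ v in Ioo s t,
            ENNReal.ofReal (H * (2*H - 1)) * ENNReal.ofReal (|u - v| ^ (2*H - 2)) := by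
          refine setLIntegral_mono
            (measurable_const.mul
              (((measurable_const.sub measurable_id).abs.pow measurable_const).ennreal_ofReal))
            (fun v hv => ?_)
          rw [← ENNReal.ofReal_mul hα]
          refine ENNReal.ofReal_le_ofReal ?_
          have he : Real.exp (-lam * (2*t - u - v)) ≤ 1 := by
            rw [Real.exp_le_one_iff]
            have h1 : u < t := hu.2
            have h2 : v < t := hv.2
            nlinarith
          exact mul_le_of_le_one_left
            (mul_nonneg hα (Real.rpow_nonneg (abs_nonneg _) _)) he
      _ = ENNReal.ofReal (H * (2*H - 1)) * ∫⁻ v in Ioo s t, ENNReal.ofReal (|u - v| ^ (2*H - 2)) :=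
          lintegral_const_mul' _ _ ENNReal.ofReal_ne_top
      _ ≤ ENNReal.ofReal (H * (2*H - 1)) * ENNReal.ofReal (2 * ((t - s) ^ (2*H - 1) / (2*H - 1))) :=
          mul_le_mul_right hb _
      _ = ENNReal.ofReal D := by rw [← ENNReal.ofReal_mul hα, hD]
  calc ∫⁻ u in Ioo s t, ∫⁻ v in Ioo s t,
      ENNReal.ofReal (Real.exp (-lam * (2*t - u - v)) * (H * (2*H - 1) * |u - v| ^ (2*H - 2)))
      ≤ ∫⁻ _u in Ioo s t, ENNReal.ofReal D := setLIntegral_mono measurable_const inner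
    _ = ENNReal.ofReal D * volume (Ioo s t) := setLIntegral_const _ _
    _ = ENNReal.ofReal D * ENNReal.ofReal (t - s) := by rw [Real.volume_Ioo]
    _ = ENNReal.ofReal (D * (t - s)) := (ENNReal.ofReal_mul hD0).symm
    _ = ENNReal.ofReal (2 * H * (t - s) ^ (2*H)) := by
        congr 1
        have h2H : (2*H - 1) ≠ 0 := by linarith
        rw [hD, show (2*H) = (2*H - 1) + 1 by ring, Real.rpow_add_one hts.ne']
        simp only [add_sub_cancel_right]
        have hinv : (2*H - 1) * (2*H - 1)⁻¹ = 1 := mul_inv_cancel₀ h2H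
        rw [div_eq_mul_inv]
        linear_combination (2*H*(t - s)^(2*H - 1)*(t - s)) * hinv

lemma J_bound2 {H s t : ℝ} (hH1 : 1/2 < H) (hH2 : H < 1) (hst : s < t) {lam : ℝ}
    (hlam : 0 < lam) :
    ∫⁻ u in Ioo s t, ∫⁻ v in Ioo s t,
        ENNReal.ofReal (Real.exp (-lam * (2*t - u - v)) * (H * (2*H - 1) * |u - v| ^ (2*H - 2)))
      ≤ ENNReal.ofReal ((H * (2*H - 1) * Real.Gamma (2*H - 1) * 2 ^ (2*H + 2)) * lam ^ (-(2*H))) := by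
  have hp : -1 < 2*H - 2 := by linarith
  have hα : (0:ℝ) ≤ H * (2*H - 1) := by nlinarith
  set c : ℝ := lam / 2 with hcdef
  have hc : 0 < c := by positivity
  set D : ℝ := 2 * ((1/c) ^ (2*H - 1) * Real.Gamma (2*H - 1)) with hD
  have hΓ : 0 < Real.Gamma (2*H - 1) := Real.Gamma_pos_of_pos (by linarith)
  have hD0 : 0 ≤ D := by
    apply mul_nonneg (by norm_num)
    exact mul_nonneg (Real.rpow_nonneg (by positivity) _) hΓ.le
  have inner : ∀ u ∈ Ioo s t, ∫⁻ v in Ioo s t,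
      ENNReal.ofReal (Real.exp (-lam * (2*t - u - v)) * (H * (2*H - 1) * |u - v| ^ (2*H - 2)))
      ≤ ENNReal.ofReal (Real.exp (-(c * (t - u)))) * ENNReal.ofReal (H * (2*H - 1) * D) := by
    intro u hu
    have hb := inner_exp_bound hp hc u s t
    rw [show (2*H - 2) + 1 = 2*H - 1 by ring] at hb
    calc ∫⁻ v in Ioo s t,
        ENNReal.ofReal (Real.exp (-lam * (2*t - u - v)) * (H * (2*H - 1) * |u - v| ^ (2*H - 2)))
        ≤ ∫⁻ v in Ioo s t,
            ENNReal.ofReal (H * (2*H - 1) * Real.exp (-(c * (t - u))))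
              * ENNReal.ofReal (|u - v| ^ (2*H - 2) * Real.exp (-(c * |u - v|))) := by
          refine setLIntegral_mono
            (measurable_const.mul
              ((((measurable_const.sub measurable_id).abs.pow measurable_const).mul
                (((measurable_const.sub measurable_id).abs.const_mul c).neg.exp)).ennreal_ofReal))
            (fun v hv => ?_)
          rw [← ENNReal.ofReal_mul (mul_nonneg hα (Real.exp_pos _).le)]
          refine ENNReal.ofReal_le_ofReal ?_
          have hX : (0:ℝ) ≤ |u - v| ^ (2*H - 2) := Real.rpow_nonneg (abs_nonneg _) _
          have he : Real.exp (-lam * (2*t - u - v))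
              ≤ Real.exp (-(c * (t - u))) * Real.exp (-(c * |u - v|)) := by
            rw [← Real.exp_add, Real.exp_le_exp]
            have h1 : u < t := hu.2
            have h2 : v < t := hv.2
            have h3 : s < u := hu.1
            have h4 : s < v := hv.1
            rcases abs_cases (u - v) with ⟨ha1, _⟩ | ⟨ha1, _⟩ <;>
              · rw [ha1, hcdef]; nlinarith
          calc Real.exp (-lam * (2*t - u - v)) * (H * (2*H - 1) * |u - v| ^ (2*H - 2))
              ≤ (Real.exp (-(c * (t - u))) * Real.exp (-(c * |u - v|)))
                  * (H * (2*H - 1) * |u - v| ^ (2*H - 2)) :=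
                mul_le_mul_of_nonneg_right he (mul_nonneg hα hX)
            _ = H * (2*H - 1) * Real.exp (-(c * (t - u)))
                  * (|u - v| ^ (2*H - 2) * Real.exp (-(c * |u - v|))) := by ring
      _ = ENNReal.ofReal (H * (2*H - 1) * Real.exp (-(c * (t - u))))
            * ∫⁻ v in Ioo s t,
                ENNReal.ofReal (|u - v| ^ (2*H - 2) * Real.exp (-(c * |u - v|))) :=
          lintegral_const_mul' _ _ ENNReal.ofReal_ne_top
      _ ≤ ENNReal.ofReal (H * (2*H - 1) * Real.exp (-(c * (t - u)))) * ENNReal.ofReal D :=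
          mul_le_mul_right hb _
      _ = ENNReal.ofReal (Real.exp (-(c * (t - u)))) * ENNReal.ofReal (H * (2*H - 1) * D) := by
          rw [← ENNReal.ofReal_mul (mul_nonneg hα (Real.exp_pos _).le),
            ← ENNReal.ofReal_mul (Real.exp_pos _).le]
          congr 1
          ring
  have outer : ∫⁻ u in Ioo s t, ENNReal.ofReal (Real.exp (-(c * (t - u))))
      ≤ ENNReal.ofReal (2 * (1/c)) := by
    have e1 : ∫⁻ u in Ioo s t, ENNReal.ofReal (Real.exp (-(c * (t - u))))
        = ∫⁻ u in Ioo s t, ENNReal.ofReal (|t - u| ^ (0:ℝ) * Real.exp (-(c * |t - u|))) := by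
      refine setLIntegral_congr_fun measurableSet_Ioo (fun u hu => ?_)
      rw [abs_of_pos (sub_pos.mpr hu.2), Real.rpow_zero, one_mul]
    have hb := inner_exp_bound (p := 0) (by norm_num) hc t s t
    rw [e1]
    refine hb.trans (le_of_eq ?_)
    norm_num [Real.Gamma_one]
  calc ∫⁻ u in Ioo s t, ∫⁻ v in Ioo s t,
      ENNReal.ofReal (Real.exp (-lam * (2*t - u - v)) * (H * (2*H - 1) * |u - v| ^ (2*H - 2)))
      ≤ ∫⁻ u in Ioo s t,
          ENNReal.ofReal (Real.exp (-(c * (t - u)))) * ENNReal.ofReal (H * (2*H - 1) * D) :=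
        setLIntegral_mono
          ((((measurable_const.sub measurable_id).const_mul c).neg.exp.ennreal_ofReal).mul
            measurable_const) inner
    _ = ENNReal.ofReal (H * (2*H - 1) * D)
          * ∫⁻ u in Ioo s t, ENNReal.ofReal (Real.exp (-(c * (t - u)))) := by
        simp_rw [mul_comm (ENNReal.ofReal (Real.exp (-(c * (t - _))))) _]
        exact lintegral_const_mul' _ _ ENNReal.ofReal_ne_top
    _ ≤ ENNReal.ofReal (H * (2*H - 1) * D) * ENNReal.ofReal (2 * (1/c)) :=
        mul_le_mul_right outer _
    _ = ENNReal.ofReal ((H * (2*H - 1) * Real.Gamma (2*H - 1) * 2 ^ (2*H + 2)) * lam ^ (-(2*H))) := by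
        rw [← ENNReal.ofReal_mul (mul_nonneg hα hD0)]
        congr 1
        rw [hD, hcdef]
        have h1 : (1 / (lam/2)) = 2 / lam := by field_simp
        have h2 : (2/lam : ℝ) ^ (2*H) = (2/lam) ^ (2*H - 1) * (2/lam) := by
          have h2' := Real.rpow_add_one (show (2/lam:ℝ) ≠ 0 by positivity) (2*H - 1)
          rw [sub_add_cancel] at h2'
          exact h2'
        have h3 : (2/lam : ℝ) ^ (2*H) = 2 ^ (2*H) * lam ^ (-(2*H)) := by
          rw [Real.div_rpow (by norm_num) hlam.le, Real.rpow_neg hlam.le, div_eq_mul_inv]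
        have h42 : (2:ℝ) ^ (2:ℝ) = 4 := by
          rw [show (2:ℝ) = ((2:ℕ):ℝ) from by norm_num, Real.rpow_natCast]
          norm_num
        have h4 : (2:ℝ) ^ (2*H + 2) = 2 ^ (2*H) * 4 := by
          rw [Real.rpow_add two_pos, h42]
        rw [h1]
        calc H * (2*H - 1) * (2 * ((2/lam) ^ (2*H - 1) * Real.Gamma (2*H - 1))) * (2 * (2/lam))
            = H * (2*H - 1) * Real.Gamma (2*H - 1) * 4 * ((2/lam) ^ (2*H - 1) * (2/lam)) := by ring
          _ = H * (2*H - 1) * Real.Gamma (2*H - 1) * 4 * (2 ^ (2*H) * lam ^ (-(2*H))) := by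
              rw [← h2, h3]
          _ = H * (2*H - 1) * Real.Gamma (2*H - 1) * 2 ^ (2*H + 2) * lam ^ (-(2*H)) := by
              rw [h4]; ring



noncomputable def CC (H : ℝ) : ℝ :=
  max (H * (2*H - 1) * Real.Gamma (2*H - 1) * 2 ^ (2*H + 2)) (max (2*H) 1)

lemma one_le_CC (H : ℝ) : 1 ≤ CC H := le_max_of_le_right (le_max_right _ _)
lemma CC_pos (H : ℝ) : 0 < CC H := lt_of_lt_of_le one_pos (one_le_CC H)

lemma interp {H δ lam r : ℝ} (hH1 : 1/2 < H) (hH2 : H < 1) (hδ0 : 0 ≤ δ) (hδH : δ ≤ H)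
    (hlam : 0 < lam) (hr : 0 < r) :
    lam ^ (2*δ) * min (2 * H * r ^ (2*H))
        ((H * (2*H - 1) * Real.Gamma (2*H - 1) * 2 ^ (2*H + 2)) * lam ^ (-(2*H)))
      ≤ CC H * r ^ (2*(H - δ)) := by
  set K : ℝ := H * (2*H - 1) * Real.Gamma (2*H - 1) * 2 ^ (2*H + 2) with hKdef
  have hΓ : 0 < Real.Gamma (2*H - 1) := Real.Gamma_pos_of_pos (by linarith)
  have hKpos : 0 < K := by
    apply mul_pos (mul_pos (mul_pos (by linarith) (by linarith)) hΓ)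
    positivity
  have hH0 : 0 < H := by linarith
  set θ : ℝ := δ / H with hθdef
  have hθ0 : 0 ≤ θ := div_nonneg hδ0 hH0.le
  have hθ1 : θ ≤ 1 := (div_le_one hH0).mpr hδH
  set A : ℝ := K * lam ^ (-(2*H)) with hAdef
  set B : ℝ := 2 * H * r ^ (2*H) with hBdef
  have hApos : 0 < A := mul_pos hKpos (Real.rpow_pos_of_pos hlam _)
  have hBpos : 0 < B := by
    have := Real.rpow_pos_of_pos hr (2*H); positivity
  have hmin0 : 0 < min B A := lt_min hBpos hApos
  have hmin : min B A ≤ A ^ θ * B ^ (1 - θ) := by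
    have h1 : min B A = (min B A) ^ θ * (min B A) ^ (1 - θ) := by
      rw [← Real.rpow_add hmin0, show θ + (1 - θ) = 1 by ring, Real.rpow_one]
    rw [h1]
    exact mul_le_mul (Real.rpow_le_rpow hmin0.le (min_le_right _ _) hθ0)
      (Real.rpow_le_rpow hmin0.le (min_le_left _ _) (by linarith))
      (Real.rpow_nonneg hmin0.le _) (Real.rpow_nonneg hApos.le _)
  have hHθ : 2*H*θ = 2*δ := by
    rw [hθdef]; field_simp
  have hAθ : A ^ θ = K ^ θ * lam ^ (-(2*δ)) := by
    rw [hAdef, Real.mul_rpow hKpos.le (Real.rpow_nonneg hlam.le _),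
      ← Real.rpow_mul hlam.le, show -(2*H)*θ = -(2*δ) by rw [← hHθ]; ring]
  have hBθ : B ^ (1 - θ) = (2*H) ^ (1 - θ) * r ^ (2*(H - δ)) := by
    rw [hBdef, Real.mul_rpow (by linarith) (Real.rpow_nonneg hr.le _),
      ← Real.rpow_mul hr.le, show (2*H)*(1 - θ) = 2*(H - δ) by rw [mul_one_sub, hHθ]; ring]
  have hlam2 : lam ^ (2*δ) * lam ^ (-(2*δ)) = 1 := by
    rw [← Real.rpow_add hlam, show 2*δ + -(2*δ) = 0 by ring, Real.rpow_zero]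
  have hfinal : K ^ θ * (2*H) ^ (1 - θ) ≤ CC H := by
    have hCpos := CC_pos H
    have h1 : K ^ θ ≤ CC H ^ θ :=
      Real.rpow_le_rpow hKpos.le (le_max_left _ _) hθ0
    have h2 : (2*H) ^ (1 - θ) ≤ CC H ^ (1 - θ) :=
      Real.rpow_le_rpow (by linarith) (le_trans (le_max_left _ _) (le_max_right _ _))
        (by linarith)
    have h3 : CC H ^ θ * CC H ^ (1 - θ) = CC H := by
      rw [← Real.rpow_add hCpos, show θ + (1 - θ) = 1 by ring, Real.rpow_one]
    calc K ^ θ * (2*H) ^ (1 - θ) ≤ CC H ^ θ * CC H ^ (1 - θ) :=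
          mul_le_mul h1 h2 (Real.rpow_nonneg (by linarith) _) (Real.rpow_nonneg hCpos.le _)
      _ = CC H := h3
  calc lam ^ (2*δ) * min B A ≤ lam ^ (2*δ) * (A ^ θ * B ^ (1 - θ)) :=
        mul_le_mul_of_nonneg_left hmin (Real.rpow_nonneg hlam.le _)
    _ = (K ^ θ * (2*H) ^ (1 - θ)) * ((lam ^ (2*δ) * lam ^ (-(2*δ))) * r ^ (2*(H - δ))) := by
        rw [hAθ, hBθ]; ring
    _ = (K ^ θ * (2*H) ^ (1 - θ)) * r ^ (2*(H - δ)) := by rw [hlam2]; ring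
    _ ≤ CC H * r ^ (2*(H - δ)) :=
        mul_le_mul_of_nonneg_right hfinal (Real.rpow_nonneg hr.le _)

lemma mode_bound {H δ s t lam : ℝ} (hH1 : 1/2 < H) (hH2 : H < 1) (hδ0 : 0 ≤ δ) (hδH : δ ≤ H)
    (hst : s < t) (hlam : 0 < lam) :
    ENNReal.ofReal (lam ^ (2*δ)) *
      (∫⁻ u in Ioo s t, ∫⁻ v in Ioo s t,
        ENNReal.ofReal (Real.exp (-lam * (2*t - u - v)) * (H * (2*H - 1) * |u - v| ^ (2*H - 2))))
      ≤ ENNReal.ofReal (CC H * (t - s) ^ (2*(H - δ))) := by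
  have hts : 0 < t - s := sub_pos.mpr hst
  have hmin : (∫⁻ u in Ioo s t, ∫⁻ v in Ioo s t,
      ENNReal.ofReal (Real.exp (-lam * (2*t - u - v)) * (H * (2*H - 1) * |u - v| ^ (2*H - 2))))
      ≤ ENNReal.ofReal (min (2 * H * (t - s) ^ (2*H))
          ((H * (2*H - 1) * Real.Gamma (2*H - 1) * 2 ^ (2*H + 2)) * lam ^ (-(2*H)))) := by
    rcases le_total (2 * H * (t - s) ^ (2*H))
        ((H * (2*H - 1) * Real.Gamma (2*H - 1) * 2 ^ (2*H + 2)) * lam ^ (-(2*H))) with h | h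
    · rw [min_eq_left h]; exact J_bound1 hH1 hH2 hst hlam
    · rw [min_eq_right h]; exact J_bound2 hH1 hH2 hst hlam
  calc ENNReal.ofReal (lam ^ (2*δ)) *
      (∫⁻ u in Ioo s t, ∫⁻ v in Ioo s t,
        ENNReal.ofReal (Real.exp (-lam * (2*t - u - v)) * (H * (2*H - 1) * |u - v| ^ (2*H - 2))))
      ≤ ENNReal.ofReal (lam ^ (2*δ)) * ENNReal.ofReal (min (2 * H * (t - s) ^ (2*H))
          ((H * (2*H - 1) * Real.Gamma (2*H - 1) * 2 ^ (2*H + 2)) * lam ^ (-(2*H)))) :=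
        mul_le_mul_right hmin _
    _ = ENNReal.ofReal (lam ^ (2*δ) * min (2 * H * (t - s) ^ (2*H))
          ((H * (2*H - 1) * Real.Gamma (2*H - 1) * 2 ^ (2*H + 2)) * lam ^ (-(2*H)))) :=
        (ENNReal.ofReal_mul (Real.rpow_nonneg hlam.le _)).symm
    _ ≤ ENNReal.ofReal (CC H * (t - s) ^ (2*(H - δ))) :=
        ENNReal.ofReal_le_ofReal (interp hH1 hH2 hδ0 hδH hlam hts)

noncomputable def Fm (H δ t : ℝ) (lam a : ℕ → ℝ) (i : ℕ) (u v : ℝ) : ℝ≥0∞ :=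
  ENNReal.ofReal (lam i ^ (2 * δ) * a i ^ 2 *
    (Real.exp (-lam i * (2*t - u - v)) * (H * (2*H - 1) * |u - v| ^ (2*H - 2))))

end Stmt3Aux

set_option maxHeartbeats 1000000 in
/-- For `H ∈ (1/2, 1)`, `φ(y) = H(2H-1)|y|^{2H-2}`, positive eigenvalues
`(λ_i)` and a square-summable sequence `(a_i)`, there is `C > 0` depending only on `H`
such that for every `δ ∈ [0, H]` and all `0 ≤ s < t`,
`∫_s^t ∫_s^t (Σ_i λ_i^{2δ} e^{-λ_i(2t-u-v)} a_i²) φ(u-v) du dv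
  ≤ C (t-s)^{2(H-δ)} Σ_i a_i²`. -/
theorem stmt_3 (H : ℝ) (hH : H ∈ Set.Ioo (1/2 : ℝ) 1)
    (lam : ℕ → ℝ) (hlam : ∀ i, 0 < lam i)
    (a : ℕ → ℝ) (ha : Summable (fun i => a i ^ 2)) :
    ∃ C : ℝ, 0 < C ∧ ∀ δ : ℝ, δ ∈ Set.Icc 0 H → ∀ s t : ℝ, 0 ≤ s → s < t →
      (∫ u in Set.Ioo s t, ∫ v in Set.Ioo s t,
          (∑' i : ℕ, lam i ^ (2 * δ) * Real.exp (-lam i * (2*t - u - v)) * a i ^ 2) *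
            (H * (2*H - 1) * |u - v| ^ (2*H - 2)))
        ≤ C * (t - s) ^ (2 * (H - δ)) * ∑' i : ℕ, a i ^ 2 := by
  obtain ⟨hH1, hH2⟩ := hH
  refine ⟨Stmt3Aux.CC H, Stmt3Aux.CC_pos H, ?_⟩
  intro δ hδ s t hs0 hst
  obtain ⟨hδ0, hδH⟩ := hδ
  have hts : 0 < t - s := sub_pos.mpr hst
  have hα : (0:ℝ) ≤ H * (2*H - 1) := by nlinarith
  have hterm0 : ∀ (i : ℕ) (u v : ℝ),
      0 ≤ lam i ^ (2 * δ) * Real.exp (-lam i * (2*t - u - v)) * a i ^ 2 :=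
    fun i u v => mul_nonneg
      (mul_nonneg (Real.rpow_nonneg (hlam i).le _) (Real.exp_pos _).le) (sq_nonneg _)
  have hφ0 : ∀ u v : ℝ, 0 ≤ H * (2*H - 1) * |u - v| ^ (2*H - 2) :=
    fun u v => mul_nonneg hα (Real.rpow_nonneg (abs_nonneg _) _)
  have hg0 : ∀ u v : ℝ, 0 ≤
      (∑' i : ℕ, lam i ^ (2 * δ) * Real.exp (-lam i * (2*t - u - v)) * a i ^ 2) *
        (H * (2*H - 1) * |u - v| ^ (2*H - 2)) :=
    fun u v => mul_nonneg (tsum_nonneg fun i => hterm0 i u v) (hφ0 u v)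
  have hc0 : ∀ i : ℕ, (0:ℝ) ≤ lam i ^ (2 * δ) * a i ^ 2 :=
    fun i => mul_nonneg (Real.rpow_nonneg (hlam i).le _) (sq_nonneg _)
  have hFmeas : ∀ i, Measurable (fun q : ℝ × ℝ => Stmt3Aux.Fm H δ t lam a i q.1 q.2) := by
    intro i
    simp only [Stmt3Aux.Fm]
    apply Measurable.ennreal_ofReal
    exact measurable_const.mul
      (((((measurable_const.sub measurable_fst).sub measurable_snd).const_mul (-lam i)).exp).mul
        (measurable_const.mul ((measurable_fst.sub measurable_snd).abs.pow measurable_const)))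
  have pointwise : ∀ u v : ℝ,
      ENNReal.ofReal ((∑' i : ℕ, lam i ^ (2 * δ) * Real.exp (-lam i * (2*t - u - v)) * a i ^ 2) *
        (H * (2*H - 1) * |u - v| ^ (2*H - 2))) ≤ ∑' i : ℕ, Stmt3Aux.Fm H δ t lam a i u v := by
    intro u v
    by_cases hsum : Summable (fun i : ℕ =>
      lam i ^ (2 * δ) * Real.exp (-lam i * (2*t - u - v)) * a i ^ 2)
    · rw [ENNReal.ofReal_mul (tsum_nonneg fun i => hterm0 i u v),
        ENNReal.ofReal_tsum_of_nonneg (fun i => hterm0 i u v) hsum, ← ENNReal.tsum_mul_right]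
      refine ENNReal.tsum_le_tsum fun i => ?_
      simp only [Stmt3Aux.Fm]
      rw [← ENNReal.ofReal_mul (hterm0 i u v)]
      exact ENNReal.ofReal_le_ofReal (le_of_eq (by ring))
    · rw [tsum_eq_zero_of_not_summable hsum, zero_mul, ENNReal.ofReal_zero]
      exact zero_le
  have step12 : ENNReal.ofReal (∫ u in Set.Ioo s t, ∫ v in Set.Ioo s t,
      (∑' i : ℕ, lam i ^ (2 * δ) * Real.exp (-lam i * (2*t - u - v)) * a i ^ 2) *
        (H * (2*H - 1) * |u - v| ^ (2*H - 2)))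
      ≤ ∑' i : ℕ, ∫⁻ u in Ioo s t, ∫⁻ v in Ioo s t, Stmt3Aux.Fm H δ t lam a i u v := by
    calc ENNReal.ofReal (∫ u in Set.Ioo s t, ∫ v in Set.Ioo s t,
        (∑' i : ℕ, lam i ^ (2 * δ) * Real.exp (-lam i * (2*t - u - v)) * a i ^ 2) *
          (H * (2*H - 1) * |u - v| ^ (2*H - 2)))
        ≤ ∫⁻ u in Ioo s t, ENNReal.ofReal (∫ v in Set.Ioo s t,
            (∑' i : ℕ, lam i ^ (2 * δ) * Real.exp (-lam i * (2*t - u - v)) * a i ^ 2) *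
              (H * (2*H - 1) * |u - v| ^ (2*H - 2))) :=
          Stmt3Aux.ofReal_int_le _ _ (ae_of_all _ fun u => integral_nonneg fun v => hg0 u v)
      _ ≤ ∫⁻ u in Ioo s t, ∫⁻ v in Ioo s t, ENNReal.ofReal
            ((∑' i : ℕ, lam i ^ (2 * δ) * Real.exp (-lam i * (2*t - u - v)) * a i ^ 2) *
              (H * (2*H - 1) * |u - v| ^ (2*H - 2))) :=
          lintegral_mono fun u => Stmt3Aux.ofReal_int_le _ _ (ae_of_all _ fun v => hg0 u v)
      _ ≤ ∫⁻ u in Ioo s t, ∫⁻ v in Ioo s t, ∑' i : ℕ, Stmt3Aux.Fm H δ t lam a i u v :=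
          lintegral_mono fun u => lintegral_mono fun v => pointwise u v
      _ = ∫⁻ u in Ioo s t, ∑' i : ℕ, ∫⁻ v in Ioo s t, Stmt3Aux.Fm H δ t lam a i u v :=
          lintegral_congr fun u => lintegral_tsum fun i =>
            ((hFmeas i).comp measurable_prodMk_left).aemeasurable
      _ = ∑' i : ℕ, ∫⁻ u in Ioo s t, ∫⁻ v in Ioo s t, Stmt3Aux.Fm H δ t lam a i u v :=
          lintegral_tsum fun i =>
            (Measurable.lintegral_prod_right
              (f := fun u v => Stmt3Aux.Fm H δ t lam a i u v) (hFmeas i)).aemeasurable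
  have hper : ∀ i : ℕ, ∫⁻ u in Ioo s t, ∫⁻ v in Ioo s t, Stmt3Aux.Fm H δ t lam a i u v
      ≤ ENNReal.ofReal (a i ^ 2) * ENNReal.ofReal (Stmt3Aux.CC H * (t - s) ^ (2*(H - δ))) := by
    intro i
    calc ∫⁻ u in Ioo s t, ∫⁻ v in Ioo s t, Stmt3Aux.Fm H δ t lam a i u v
        = ∫⁻ u in Ioo s t, ∫⁻ v in Ioo s t,
            ENNReal.ofReal (lam i ^ (2 * δ) * a i ^ 2) * ENNReal.ofReal
              (Real.exp (-lam i * (2*t - u - v)) * (H * (2*H - 1) * |u - v| ^ (2*H - 2))) := by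
          simp_rw [Stmt3Aux.Fm, ENNReal.ofReal_mul (hc0 i)]
      _ = ENNReal.ofReal (lam i ^ (2 * δ) * a i ^ 2) *
            ∫⁻ u in Ioo s t, ∫⁻ v in Ioo s t, ENNReal.ofReal
              (Real.exp (-lam i * (2*t - u - v)) * (H * (2*H - 1) * |u - v| ^ (2*H - 2))) := by
          rw [lintegral_congr fun u => lintegral_const_mul' _ _ ENNReal.ofReal_ne_top,
            lintegral_const_mul' _ _ ENNReal.ofReal_ne_top]
      _ = ENNReal.ofReal (a i ^ 2) * (ENNReal.ofReal (lam i ^ (2 * δ)) *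
            ∫⁻ u in Ioo s t, ∫⁻ v in Ioo s t, ENNReal.ofReal
              (Real.exp (-lam i * (2*t - u - v)) * (H * (2*H - 1) * |u - v| ^ (2*H - 2)))) := by
          rw [show lam i ^ (2 * δ) * a i ^ 2 = a i ^ 2 * lam i ^ (2 * δ) from mul_comm _ _,
            ENNReal.ofReal_mul (sq_nonneg _), mul_assoc]
      _ ≤ ENNReal.ofReal (a i ^ 2) * ENNReal.ofReal (Stmt3Aux.CC H * (t - s) ^ (2*(H - δ))) :=
          mul_le_mul_right
            (Stmt3Aux.mode_bound hH1 hH2 hδ0 hδH hst (hlam i)) _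
  have hRHS0 : 0 ≤ Stmt3Aux.CC H * (t - s) ^ (2 * (H - δ)) * ∑' i : ℕ, a i ^ 2 :=
    mul_nonneg (mul_nonneg (Stmt3Aux.CC_pos H).le (Real.rpow_nonneg hts.le _))
      (tsum_nonneg fun i => sq_nonneg _)
  refine (ENNReal.ofReal_le_ofReal_iff hRHS0).mp ?_
  calc ENNReal.ofReal (∫ u in Set.Ioo s t, ∫ v in Set.Ioo s t,
      (∑' i : ℕ, lam i ^ (2 * δ) * Real.exp (-lam i * (2*t - u - v)) * a i ^ 2) *
        (H * (2*H - 1) * |u - v| ^ (2*H - 2)))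
      ≤ ∑' i : ℕ, ∫⁻ u in Ioo s t, ∫⁻ v in Ioo s t, Stmt3Aux.Fm H δ t lam a i u v := step12
    _ ≤ ∑' i : ℕ, ENNReal.ofReal (a i ^ 2) *
          ENNReal.ofReal (Stmt3Aux.CC H * (t - s) ^ (2*(H - δ))) := ENNReal.tsum_le_tsum hper
    _ = (∑' i : ℕ, ENNReal.ofReal (a i ^ 2)) *
          ENNReal.ofReal (Stmt3Aux.CC H * (t - s) ^ (2*(H - δ))) := ENNReal.tsum_mul_right
    _ = ENNReal.ofReal (∑' i : ℕ, a i ^ 2) *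
          ENNReal.ofReal (Stmt3Aux.CC H * (t - s) ^ (2*(H - δ))) := by
        rw [ENNReal.ofReal_tsum_of_nonneg (fun i => sq_nonneg _) ha]
    _ = ENNReal.ofReal (Stmt3Aux.CC H * (t - s) ^ (2 * (H - δ)) * ∑' i : ℕ, a i ^ 2) := by
        rw [← ENNReal.ofReal_mul (tsum_nonneg fun i => sq_nonneg _), mul_comm]
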